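/- Define g(μ, x) = μ log(∑_{i=1}^n exp(x_i/μ)) − μ log n for μ > 0 and x ∈ ℝ^n. Then for every fixed x, the partial derivative of g with respect to μ satisfies −log n ≤ ∂g/∂μ ≤ 0. -/

import Mathlib

open Finset

theorem stmt_8 (n : ℕ) (hn : 1 ≤ n) (x : Fin n → ℝ) :
    ∀ μ : ℝ, 0 < μ → ∀ d : ℝ,
      HasDerivAt (fun μ : ℝ => μ * Real.log (∑ i, Real.exp (x i / μ)) - μ * Real.log n) d μ →
        -Real.log n ≤ d ∧ d ≤ 0 := by
  intro μ hμ d hd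
  have hne : (Finset.univ : Finset (Fin n)).Nonempty := by
    rw [Finset.univ_nonempty_iff]
    exact Fin.pos_iff_nonempty.mp hn
  set S : ℝ := ∑ i, Real.exp (x i / μ) with hSdef
  have hS : 0 < S := Finset.sum_pos (fun i _ => Real.exp_pos _) hne
  set T : ℝ := ∑ i, Real.exp (x i / μ) * (x i / μ) with hTdef
  -- derivative of the inner sum
  have hsum : HasDerivAt (fun μ : ℝ => ∑ i, Real.exp (x i / μ))
      (∑ i, Real.exp (x i / μ) * (x i * -(μ ^ 2)⁻¹)) μ := by
    apply HasDerivAt.fun_sum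
    intro i _
    have h1 : HasDerivAt (fun μ : ℝ => x i / μ) (x i * -(μ ^ 2)⁻¹) μ := by
      simpa [div_eq_mul_inv] using (hasDerivAt_inv hμ.ne').const_mul (x i)
    simpa [mul_comm] using h1.exp
  have hlog : HasDerivAt (fun μ : ℝ => Real.log (∑ i, Real.exp (x i / μ)))
      ((∑ i, Real.exp (x i / μ) * (x i * -(μ ^ 2)⁻¹)) / S) μ := hsum.log hS.ne'
  have hf : HasDerivAt
      (fun μ : ℝ => μ * Real.log (∑ i, Real.exp (x i / μ)) - μ * Real.log n)
      ((1 * Real.log S + μ * ((∑ i, Real.exp (x i / μ) * (x i * -(μ ^ 2)⁻¹)) / S))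
        - Real.log n) μ := by
    simpa using ((hasDerivAt_id μ).fun_mul hlog).fun_sub ((hasDerivAt_id μ).mul_const (Real.log n))
  have hdval : d = Real.log S - Real.log n - T / S := by
    rw [hd.unique hf, hTdef]
    rw [Finset.sum_div, Finset.mul_sum, Finset.sum_div]
    have hterm : ∀ i : Fin n, μ * (Real.exp (x i / μ) * (x i * -(μ ^ 2)⁻¹) / S)
        = -(Real.exp (x i / μ) * (x i / μ) / S) := by
      intro i
      field_simp
    rw [Finset.sum_congr rfl (fun i _ => hterm i), Finset.sum_neg_distrib]
    ring
  -- lower bound: T ≤ S * log S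
  have hT_le : T ≤ S * Real.log S := by
    rw [hTdef, hSdef]
    calc ∑ i, Real.exp (x i / μ) * (x i / μ)
        ≤ ∑ i, Real.exp (x i / μ) * Real.log S := by
          apply Finset.sum_le_sum
          intro i _
          apply mul_le_mul_of_nonneg_left _ (Real.exp_pos _).le
          have : Real.exp (x i / μ) ≤ S :=
            Finset.single_le_sum (fun j _ => (Real.exp_pos (x j / μ)).le) (Finset.mem_univ i)
          calc x i / μ = Real.log (Real.exp (x i / μ)) := (Real.log_exp _).symm
            _ ≤ Real.log S := Real.log_le_log (Real.exp_pos _) this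
      _ = S * Real.log S := by rw [← Finset.sum_mul]
  -- upper bound via Jensen
  have jensen : Real.log S - T / S ≤ Real.log n := by
    have hconc := strictConcaveOn_log_Ioi.concaveOn
    have key := hconc.le_map_sum (t := Finset.univ)
      (w := fun i : Fin n => Real.exp (x i / μ) / S)
      (p := fun i : Fin n => S / Real.exp (x i / μ))
      (fun i _ => div_nonneg (Real.exp_pos _).le hS.le)
      (by rw [← Finset.sum_div, ← hSdef, div_self hS.ne'])
      (fun i _ => Set.mem_Ioi.mpr (div_pos hS (Real.exp_pos _)))
    have hsum_p : ∑ i : Fin n, (Real.exp (x i / μ) / S) • (S / Real.exp (x i / μ)) = n := by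
      have : ∀ i : Fin n, (Real.exp (x i / μ) / S) • (S / Real.exp (x i / μ)) = 1 := by
        intro i
        rw [smul_eq_mul]
        field_simp
      simp only [this]
      simp
    rw [hsum_p] at key
    have hlhs : ∑ i : Fin n, (Real.exp (x i / μ) / S) • Real.log (S / Real.exp (x i / μ))
        = Real.log S - T / S := by
      have : ∀ i : Fin n, (Real.exp (x i / μ) / S) • Real.log (S / Real.exp (x i / μ))
          = Real.exp (x i / μ) / S * Real.log S - Real.exp (x i / μ) * (x i / μ) / S := by
        intro i
        rw [smul_eq_mul, Real.log_div hS.ne' (Real.exp_pos _).ne', Real.log_exp]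
        ring
      rw [Finset.sum_congr rfl (fun i _ => this i), Finset.sum_sub_distrib,
        ← Finset.sum_div, ← Finset.sum_mul, ← Finset.sum_div, ← hSdef, ← hTdef,
        div_mul_eq_mul_div, mul_div_assoc]
      rw [mul_div_assoc'] at *
      rw [mul_comm S, mul_div_assoc, div_self hS.ne', mul_one]
    rw [hlhs] at key
    exact key
  constructor
  · rw [hdval]
    have : T / S ≤ Real.log S := (div_le_iff₀ hS).mpr (by linarith [hT_le])
    linarith
  · rw [hdval]
    linarith
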